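/- Let B ⊆ ℕ have positive lower density, let h : ℕ → ℝ be increasing, and let δ > 0. Then there exists B' ⊆ B with positive lower density such that the set h(B') ∩ ℕ has upper density less than δ. -/

import Mathlib

open Filter Set
open scoped Classical

noncomputable def lowerDensity (A : Set ℕ) : ℝ :=
  liminf (fun N : ℕ => (((Finset.Icc 1 N).filter (fun n => n ∈ A)).card : ℝ) / N) atTop

noncomputable def upperDensity (A : Set ℕ) : ℝ :=
  limsup (fun N : ℕ => (((Finset.Icc 1 N).filter (fun n => n ∈ A)).card : ℝ) / N) atTop

section Aux

variable (B : Set ℕ) (h : ℕ → ℝ)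

/-- Elements of `B` whose image under `h` is a natural number. -/
def Tset : Set ℕ := {b | b ∈ B ∧ ∃ n : ℕ, h b = (n : ℝ)}

/-- The rank of `b`: the number of elements of `Tset` that are `≤ b`. -/
noncomputable def rnk (b : ℕ) : ℕ :=
  ((Finset.range (b + 1)).filter (· ∈ Tset B h)).card

/-- The value of `h b` as a natural number, for `b ∈ Tset`. -/
noncomputable def nuv (b : ℕ) : ℕ :=
  if hb : ∃ n : ℕ, h b = (n : ℝ) then hb.choose else 0

variable (q : ℕ)

/-- The chosen subset. -/
def Bp : Set ℕ := {b | b ∈ B ∧ (b ∉ Tset B h ∨ q ∣ rnk B h b)}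

lemma nuv_spec {b : ℕ} (hb : b ∈ Tset B h) : h b = (nuv h b : ℝ) := by
  rcases hb with ⟨-, hb⟩
  simp only [nuv, dif_pos hb]
  exact hb.choose_spec

lemma rnk_lt_rnk {b b' : ℕ} (hb' : b' ∈ Tset B h) (hlt : b < b') :
    rnk B h b < rnk B h b' := by
  apply Finset.card_lt_card
  constructor
  · apply Finset.filter_subset_filter
    exact Finset.range_subset_range.2 (by omega)
  · intro hsub
    have : b' ∈ (Finset.range (b + 1)).filter (· ∈ Tset B h) :=
      hsub (by simp [Finset.mem_filter, Finset.mem_range, hb'])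
    simp only [Finset.mem_filter, Finset.mem_range] at this
    omega

lemma rnk_pos {b : ℕ} (hb : b ∈ Tset B h) : 0 < rnk B h b := by
  apply Finset.card_pos.2
  exact ⟨b, by simp [Finset.mem_filter, Finset.mem_range, hb]⟩

lemma rnk_injOn {b b' : ℕ} (hb : b ∈ Tset B h) (hb' : b' ∈ Tset B h)
    (he : rnk B h b = rnk B h b') : b = b' := by
  rcases lt_trichotomy b b' with hlt | he' | hlt
  · exact absurd he (rnk_lt_rnk B h hb' hlt).ne
  · exact he'
  · exact absurd he.symm (rnk_lt_rnk B h hb hlt).ne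

lemma rnk_le_of_eq (hh : StrictMono h) {b n : ℕ} (hb : b ∈ Tset B h)
    (hbn : h b = (n : ℝ)) : rnk B h b ≤ n + 1 := by
  have : ((Finset.range (b + 1)).filter (· ∈ Tset B h)).card ≤
      (Finset.range (n + 1)).card := by
    apply Finset.card_le_card_of_injOn (fun x => nuv h x)
    · intro x hx
      simp only [Finset.mem_coe, Finset.mem_filter, Finset.mem_range] at hx
      obtain ⟨hxb, hxT⟩ := hx
      have h1 : h x ≤ h b := hh.monotone (by omega)
      rw [nuv_spec B h hxT, hbn] at h1
      simp only [Finset.mem_coe, Finset.mem_range]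
      exact_mod_cast Nat.lt_succ_of_le (by exact_mod_cast h1)
    · intro x hx y hy hxy
      simp only [Finset.coe_filter, Set.mem_setOf_eq] at hx hy
      apply hh.injective
      simp only at hxy
      rw [nuv_spec B h hx.2, nuv_spec B h hy.2, hxy]
  simpa [rnk] using this

/-- rank of any element of `T ∩ [1,N]` is at most `(card of T ∩ [1,N]) + 1`. -/
lemma rnk_le_card {N b : ℕ} (hbN : b ≤ N) (hb : b ∈ Tset B h) :
    rnk B h b ≤ ((Finset.Icc 1 N).filter (· ∈ Tset B h)).card + 1 := by
  have hsub : (Finset.range (b + 1)).filter (· ∈ Tset B h) ⊆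
      insert 0 ((Finset.Icc 1 N).filter (· ∈ Tset B h)) := by
    intro x hx
    simp only [Finset.mem_filter, Finset.mem_range] at hx
    rcases Nat.eq_zero_or_pos x with rfl | hx0
    · exact Finset.mem_insert_self _ _
    · exact Finset.mem_insert_of_mem (by
        simp only [Finset.mem_filter, Finset.mem_Icc]
        exact ⟨⟨hx0, by omega⟩, hx.2⟩)
  calc rnk B h b ≤ (insert 0 ((Finset.Icc 1 N).filter (· ∈ Tset B h))).card :=
        Finset.card_le_card hsub
    _ ≤ _ := Finset.card_insert_le _ _

end Aux

theorem stmt0 (B : Set ℕ) (hB : 0 < lowerDensity B) (h : ℕ → ℝ) (hh : StrictMono h)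
    (δ : ℝ) (hδ : 0 < δ) :
    ∃ B' ⊆ B, 0 < lowerDensity B' ∧
      upperDensity {n : ℕ | ∃ b ∈ B', h b = (n : ℝ)} < δ := by
  set q : ℕ := ⌈1 / δ⌉₊ + 1 with hqdef
  have hq0 : 0 < q := Nat.succ_pos _
  have hqR : (0 : ℝ) < q := by exact_mod_cast hq0
  have hq : 1 / (q : ℝ) < δ := by
    rw [div_lt_iff₀ hqR]
    calc (1 : ℝ) = δ * (1 / δ) := by field_simp
      _ ≤ δ * ⌈1 / δ⌉₊ := by
          apply mul_le_mul_of_nonneg_left (Nat.le_ceil _) hδ.le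
      _ < δ * q := by
          apply mul_lt_mul_of_pos_left _ hδ
          exact_mod_cast Nat.lt_succ_self _
  set T : Set ℕ := Tset B h with hTdef
  set B' : Set ℕ := Bp B h q with hB'def
  have hB'B : B' ⊆ B := fun b hb => hb.1
  have hTB : ∀ b, b ∈ T → b ∈ B := fun b hb => hb.1
  clear_value q
  -- counting inequality for the lower density
  have key : ∀ N : ℕ, ((Finset.Icc 1 N).filter (fun n => n ∈ B)).card ≤
      q * ((Finset.Icc 1 N).filter (fun n => n ∈ B')).card + 2 * q := by
    intro N
    set F := Finset.Icc 1 N with hF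
    set A := F.filter (fun n => n ∈ B) with hA
    set A' := F.filter (fun n => n ∈ B') with hA'
    set M := F.filter (fun n => n ∈ T) with hM
    set S := F.filter (fun b => b ∈ T ∧ q ∣ rnk B h b) with hS
    set C := F.filter (fun b => b ∈ B ∧ b ∉ T) with hC
    have h1 : A.card = C.card + M.card := by
      have e1 : A.filter (fun b => ¬ b ∈ T) = C := by
        rw [hA, Finset.filter_filter]
      have e2 : A.filter (fun b => b ∈ T) = M := by
        rw [hA, hM, Finset.filter_filter]
        apply Finset.filter_congr
        intro b _
        constructor
        · tauto
        · intro hb; exact ⟨hTB b hb, hb⟩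
      rw [← e1, ← e2, add_comm]
      exact (Finset.card_filter_add_card_filter_not _).symm
    have h2 : A'.card = C.card + S.card := by
      have e1 : A'.filter (fun b => ¬ b ∈ T) = C := by
        rw [hA', Finset.filter_filter]
        apply Finset.filter_congr
        intro b _
        constructor
        · rintro ⟨⟨hb, -⟩, hnT⟩; exact ⟨hb, hnT⟩
        · rintro ⟨hb, hnT⟩; exact ⟨⟨hb, Or.inl hnT⟩, hnT⟩
      have e2 : A'.filter (fun b => b ∈ T) = S := by
        rw [hA', hS, Finset.filter_filter]
        apply Finset.filter_congr
        intro b _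
        constructor
        · rintro ⟨⟨hb, hor⟩, hT⟩
          rcases hor with hnT | hd
          · exact absurd hT hnT
          · exact ⟨hT, hd⟩
        · rintro ⟨hT, hd⟩; exact ⟨⟨hTB b hT, Or.inr hd⟩, hT⟩
      rw [← e1, ← e2, add_comm]
      exact (Finset.card_filter_add_card_filter_not _).symm
    have h3 : S ⊆ M := by
      intro b hb
      simp only [hS, hM, Finset.mem_filter] at hb ⊢
      exact ⟨hb.1, hb.2.1⟩
    set K := M.card + 1 with hK
    have h4 : (M \ S).card ≤ K - K / q := by
      have htarget : ((Finset.Ioc 0 K).filter (fun x => ¬ q ∣ x)).card = K - K / q := by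
        have hsplit := Finset.card_filter_add_card_filter_not
          (s := Finset.Ioc 0 K) (p := fun x => q ∣ x)
        have hdvd : ((Finset.Ioc 0 K).filter (fun x => q ∣ x)).card = K / q :=
          Nat.Ioc_filter_dvd_card_eq_div K q
        have hcardIoc : (Finset.Ioc 0 K).card = K := by simp
        omega
      rw [← htarget]
      apply Finset.card_le_card_of_injOn (fun b => rnk B h b)
      · intro b hb
        simp only [Finset.mem_coe, Finset.mem_sdiff, hM, hS, Finset.mem_filter] at hb
        obtain ⟨⟨hbF, hbT⟩, hbS⟩ := hb
        have hnd : ¬ q ∣ rnk B h b := fun hd => hbS ⟨hbF, hbT, hd⟩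
        simp only [Finset.mem_coe, Finset.mem_filter, Finset.mem_Ioc]
        have hbN : b ≤ N := by
          simp only [hF, Finset.mem_Icc] at hbF; exact hbF.2
        exact ⟨⟨rnk_pos B h hbT, rnk_le_card B h hbN hbT⟩, hnd⟩
      · intro x hx y hy hxy
        simp only [Finset.coe_sdiff, Set.mem_diff, Finset.mem_coe, hM,
          Finset.mem_filter] at hx hy
        exact rnk_injOn B h hx.1.2 hy.1.2 hxy
    have h5 : (M \ S).card + S.card = M.card := Finset.card_sdiff_add_card_eq_card h3
    have hts : K / q ≤ S.card + 1 := by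
      have : K / q ≤ K := Nat.div_le_self _ _
      omega
    have hmul : q * (K / q) ≤ q * (S.card + 1) := Nat.mul_le_mul_left _ hts
    have hdm := Nat.div_add_mod K q
    have hmod : K % q < q := Nat.mod_lt _ hq0
    have hmul2 : q * (S.card + 1) = q * S.card + q := by ring
    have hMcard : M.card + 1 ≤ q * S.card + 2 * q := by omega
    have hCle : C.card ≤ q * C.card := Nat.le_mul_of_pos_left _ hq0
    have hqA' : q * A'.card = q * C.card + q * S.card := by rw [h2]; ring
    omega
  -- eventual lower bound on the density of B'
  set d := lowerDensity B with hd
  clear_value d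
  have hgev : ∀ᶠ N : ℕ in atTop, d / 2 <
      (((Finset.Icc 1 N).filter (fun n => n ∈ B)).card : ℝ) / N := by
    apply eventually_lt_of_lt_liminf
    · rw [hd, lowerDensity] at hB ⊢
      linarith
    · exact Filter.isBoundedUnder_of ⟨0, fun N => by positivity⟩
  have hNev : ∀ᶠ N : ℕ in atTop, (8 * (q : ℝ) / d ≤ N ∧ 1 ≤ N) := by
    filter_upwards [Filter.eventually_ge_atTop (⌈8 * (q : ℝ) / d⌉₊), Filter.eventually_ge_atTop 1]
      with N h1 h2
    exact ⟨le_trans (Nat.le_ceil _) (by exact_mod_cast h1), h2⟩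
  have hfev : ∀ᶠ N : ℕ in atTop, d / (4 * q) ≤
      (((Finset.Icc 1 N).filter (fun n => n ∈ B')).card : ℝ) / N := by
    filter_upwards [hgev, hNev] with N hg hN
    obtain ⟨hN8, hN1⟩ := hN
    have hN0 : (0 : ℝ) < N := by exact_mod_cast hN1
    have hkey : (((Finset.Icc 1 N).filter (fun n => n ∈ B)).card : ℝ) ≤
        q * ((Finset.Icc 1 N).filter (fun n => n ∈ B')).card + 2 * q := by
      exact_mod_cast key N
    set a : ℝ := (((Finset.Icc 1 N).filter (fun n => n ∈ B)).card : ℝ)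
    set a' : ℝ := (((Finset.Icc 1 N).filter (fun n => n ∈ B')).card : ℝ)
    rw [div_le_div_iff₀ (by positivity) hN0]
    rw [lt_div_iff₀ hN0] at hg
    have hd0 : 0 < d := hB
    have h8 : 8 * (q : ℝ) ≤ d * N := by
      rw [div_le_iff₀ hd0] at hN8
      nlinarith
    nlinarith [hg, hkey, h8, hq0, hN0]
  have hlowpos : 0 < lowerDensity B' := by
    have hcob : IsCoboundedUnder (· ≥ ·) atTop
        (fun N : ℕ => (((Finset.Icc 1 N).filter (fun n => n ∈ B')).card : ℝ) / N) := by
      apply Filter.isCoboundedUnder_ge_of_eventually_le (l := atTop) (x := 1)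
      filter_upwards [Filter.eventually_ge_atTop 1] with N hN1
      have hN0 : (0 : ℝ) < N := by exact_mod_cast hN1
      rw [div_le_one hN0]
      have : ((Finset.Icc 1 N).filter (fun n => n ∈ B')).card ≤ N := by
        calc ((Finset.Icc 1 N).filter (fun n => n ∈ B')).card ≤ (Finset.Icc 1 N).card :=
              Finset.card_filter_le _ _
          _ = N := by simp
      exact_mod_cast this
    have : d / (4 * q) ≤ lowerDensity B' := le_liminf_of_le hcob hfev
    have hd0 : 0 < d := hB
    have : 0 < d / (4 * q) := by positivity
    linarith [le_liminf_of_le hcob hfev]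
  refine ⟨B', hB'B, hlowpos, ?_⟩
  -- upper density of the image
  set I : Set ℕ := {n : ℕ | ∃ b ∈ B', h b = (n : ℝ)} with hI
  set bOf : ℕ → ℕ := fun n => if hn : ∃ b, b ∈ B' ∧ h b = (n : ℝ) then hn.choose else 0 with hbOfdef
  have hbOf : ∀ n : ℕ, (∃ b, b ∈ B' ∧ h b = (n : ℝ)) → bOf n ∈ B' ∧ h (bOf n) = (n : ℝ) := by
    intro n hn
    simp only [hbOfdef, dif_pos hn]
    exact hn.choose_spec
  have keyU : ∀ N : ℕ, ((Finset.Icc 1 N).filter (fun n => n ∈ I)).card ≤ (N + 1) / q := by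
    intro N
    have : ((Finset.Icc 1 N).filter (fun n => n ∈ I)).card ≤
        ((Finset.Ioc 0 (N + 1)).filter (fun x => q ∣ x)).card := by
      apply Finset.card_le_card_of_injOn (fun n => rnk B h (bOf n))
      · intro n hn
        simp only [Finset.mem_coe, Finset.mem_filter, Finset.mem_Icc] at hn
        obtain ⟨⟨hn1, hnN⟩, hnI⟩ := hn
        obtain ⟨hbB', hbh⟩ := hbOf n hnI
        have hbT : bOf n ∈ T := ⟨hbB'.1, ⟨n, hbh⟩⟩
        have hdvd : q ∣ rnk B h (bOf n) := by
          rcases hbB'.2 with hnT | hd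
          · exact absurd hbT hnT
          · exact hd
        simp only [Finset.mem_coe, Finset.mem_filter, Finset.mem_Ioc]
        refine ⟨⟨rnk_pos B h hbT, ?_⟩, hdvd⟩
        have := rnk_le_of_eq B h hh hbT hbh
        omega
      · intro x hx y hy hxy
        simp only [Finset.coe_filter, Set.mem_setOf_eq, Finset.mem_Icc] at hx hy
        obtain ⟨-, hxI⟩ := hx
        obtain ⟨-, hyI⟩ := hy
        obtain ⟨hxB', hxh⟩ := hbOf x hxI
        obtain ⟨hyB', hyh⟩ := hbOf y hyI
        have hxT : bOf x ∈ T := ⟨hxB'.1, ⟨x, hxh⟩⟩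
        have hyT : bOf y ∈ T := ⟨hyB'.1, ⟨y, hyh⟩⟩
        have hbeq : bOf x = bOf y := rnk_injOn B h hxT hyT hxy
        have : (x : ℝ) = (y : ℝ) := by rw [← hxh, ← hyh, hbeq]
        exact_mod_cast this
    rw [Nat.Ioc_filter_dvd_card_eq_div] at this
    exact this
  set ε : ℝ := δ - 1 / q with hε
  have hε0 : 0 < ε := by simp only [hε]; linarith
  clear_value ε
  have huev : ∀ᶠ N : ℕ in atTop,
      (((Finset.Icc 1 N).filter (fun n => n ∈ I)).card : ℝ) / N ≤ δ - ε / 2 := by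
    filter_upwards [Filter.eventually_ge_atTop (⌈2 / ε⌉₊ + 1)] with N hN
    have hN1 : 1 ≤ N := le_trans (Nat.le_add_left 1 _) hN
    have hN0 : (0 : ℝ) < N := by exact_mod_cast hN1
    have hNε : 2 / ε ≤ N := by
      calc (2 / ε : ℝ) ≤ ⌈2 / ε⌉₊ := Nat.le_ceil _
        _ ≤ N := by exact_mod_cast le_trans (Nat.le_succ _) hN
    have h2ε : 2 ≤ ε * N := by
      rw [div_le_iff₀ hε0] at hNε
      nlinarith
    have hcard : (((Finset.Icc 1 N).filter (fun n => n ∈ I)).card : ℝ) ≤ ((N : ℝ) + 1) / q := by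
      calc (((Finset.Icc 1 N).filter (fun n => n ∈ I)).card : ℝ)
          ≤ (((N + 1) / q : ℕ) : ℝ) := by exact_mod_cast keyU N
        _ ≤ ((N + 1 : ℕ) : ℝ) / q := Nat.cast_div_le
        _ = ((N : ℝ) + 1) / q := by push_cast; ring
    rw [div_le_iff₀ hN0]
    have hq1 : (1 : ℝ) ≤ q := by exact_mod_cast hq0
    have hδq : δ * q = 1 + ε * q := by
      simp only [hε]; field_simp; ring
    rw [le_div_iff₀ hqR] at hcard
    have hstep : ε * ↑N ≤ ε * ↑N * ↑q := by nlinarith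
    have hexp : (δ - ε / 2) * ↑N * ↑q = ↑N + ε * ↑N * ↑q / 2 := by
      linear_combination (N : ℝ) * hδq
    have hεq2 : (1 : ℝ) ≤ ε * ↑N * ↑q / 2 := by linarith
    have hfin : (((Finset.Icc 1 N).filter (fun n => n ∈ I)).card : ℝ) * q ≤
        (δ - ε / 2) * N * q := by
      calc (((Finset.Icc 1 N).filter (fun n => n ∈ I)).card : ℝ) * q ≤ (N : ℝ) + 1 := hcard
        _ ≤ (N : ℝ) + ε * ↑N * ↑q / 2 := by linarith
        _ = (δ - ε / 2) * N * q := hexp.symm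
    exact le_of_mul_le_mul_right hfin hqR
  have hcob : IsCoboundedUnder (· ≤ ·) atTop
      (fun N : ℕ => (((Finset.Icc 1 N).filter (fun n => n ∈ I)).card : ℝ) / N) := by
    apply Filter.isCoboundedUnder_le_of_eventually_le (l := atTop) (x := 0)
    exact Filter.Eventually.of_forall fun N => div_nonneg (Nat.cast_nonneg _) (Nat.cast_nonneg _)
  have : upperDensity I ≤ δ - ε / 2 := limsup_le_of_le hcob huev
  calc upperDensity I ≤ δ - ε / 2 := this
    _ < δ := by linarith
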